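/- Every finitely presentable group G admits a finite presentation ⟨y_1,…,y_m | s_1,…,s_t⟩ (with the relators s_1,…,s_t pairwise distinct nontrivial elements of the free group on y_1,…,y_m) such that for every generator y_i, the total number of occurrences of the letters y_i and y_i⁻¹ among the reduced words of all the relators s_1,…,s_t is exactly 3. (This is the group-theoretic content of the paper's theorem that a group with a presentation of genus g admits a presentation of the same genus in which every generator appears exactly three times among all relations; the new presentation is obtained by introducing generators x_i^j for the j-th occurrence of x_i together with the chain relations x_i^j (x_i^{j-1})⁻¹.) -/

import Mathlib

namespace Occ3
open FreeGroup List


/-- No-cancellation predicate between adjacent letters. -/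
def RP {α : Type*} (x y : α × Bool) : Prop := ¬(x.1 = y.1 ∧ x.2 = !y.2)

theorem reduce_eq_self {α : Type*} [DecidableEq α] :
    ∀ {L : List (α × Bool)}, List.Chain' (RP) L → FreeGroup.reduce L = L
  | [], _ => rfl
  | [x], _ => rfl
  | x :: y :: L, h => by
    have ih : FreeGroup.reduce (y :: L) = y :: L := reduce_eq_self h.tail
    have hxy : RP x y := List.isChain_cons_cons.1 h |>.1
    rw [FreeGroup.reduce.cons, ih]
    simp only [RP] at hxy
    simp [hxy]

theorem chain'_reduce {α : Type*} [DecidableEq α] (L : List (α × Bool)) :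
    List.Chain' RP (FreeGroup.reduce L) := by
  induction L with
  | nil => exact List.isChain_nil
  | cons x L ih =>
    rw [FreeGroup.reduce.cons]
    cases hL : FreeGroup.reduce L with
    | nil => exact List.isChain_singleton _
    | cons hd tl =>
      rw [hL] at ih
      by_cases hc : x.1 = hd.1 ∧ x.2 = !hd.2
      · simp only [hc, and_self, if_true]
        exact ih.tail
      · simp only [hc, if_false]
        exact List.isChain_cons_cons.2 ⟨hc, ih⟩

theorem chain'_toWord {α : Type*} [DecidableEq α] (x : FreeGroup α) :
    List.Chain' RP x.toWord := by
  rw [← FreeGroup.reduce_toWord]; exact chain'_reduce _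

theorem toWord_mk_eq {α : Type*} [DecidableEq α] {L : List (α × Bool)}
    (h : List.Chain' RP L) : (FreeGroup.mk L).toWord = L := by
  rw [FreeGroup.toWord_mk, reduce_eq_self h]

/-- A hom out of a free group applied to `mk L`. -/
theorem hom_mk {α : Type*} {G : Type*} [Group G] (F : FreeGroup α →* G) :
    ∀ (L : List (α × Bool)),
      F (FreeGroup.mk L) = (L.map fun x => cond x.2 (F (of x.1)) (F (of x.1))⁻¹).prod
  | [] => by
      show F (FreeGroup.mk []) = 1
      have : (FreeGroup.mk [] : FreeGroup α) = 1 := rfl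
      rw [this]; exact map_one F
  | x :: L => by
      have h1 : (FreeGroup.mk (x :: L) : FreeGroup α) = FreeGroup.mk [x] * FreeGroup.mk L := by
        rw [FreeGroup.mul_mk]; rfl
      have h2 : (FreeGroup.mk [x] : FreeGroup α) = cond x.2 (of x.1) (of x.1)⁻¹ := by
        rcases x with ⟨a, b⟩
        cases b
        · show FreeGroup.mk [(a, false)] = (of a)⁻¹
          rw [FreeGroup.of, FreeGroup.inv_mk]; rfl
        · rfl
      rw [h1, _root_.map_mul, h2, hom_mk F L]
      simp only [List.map_cons, List.prod_cons]
      congr 1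
      rcases x with ⟨a, b⟩; cases b <;> simp

/-- next index in a cyclic chain -/
def nxt {N : ℕ} (j : Fin N) : Fin N := ⟨(j.val + 1) % N, Nat.mod_lt _ j.pos⟩

theorem nxt_injective {N : ℕ} : Function.Injective (nxt (N := N)) := by
  intro a b h
  have h' : (a.val + 1) % N = (b.val + 1) % N := congrArg Fin.val h
  have ha := a.2; have hb := b.2
  rcases Nat.lt_or_ge (a.val + 1) N with h1 | h1 <;> rcases Nat.lt_or_ge (b.val + 1) N with h2 | h2
  · rw [Nat.mod_eq_of_lt h1, Nat.mod_eq_of_lt h2] at h'; exact Fin.ext (by omega)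
  · have : b.val + 1 = N := by omega
    rw [Nat.mod_eq_of_lt h1, this, Nat.mod_self] at h'; omega
  · have : a.val + 1 = N := by omega
    rw [Nat.mod_eq_of_lt h2, this, Nat.mod_self] at h'; omega
  · exact Fin.ext (by omega)

theorem nxt_bijective {N : ℕ} : Function.Bijective (nxt (N := N)) :=
  Finite.injective_iff_bijective.1 nxt_injective

theorem nxt_ne {N : ℕ} (hN : 2 ≤ N) (j : Fin N) : nxt j ≠ j := by
  intro h
  have h' : (j.val + 1) % N = j.val := congrArg Fin.val h
  have := j.2
  rcases Nat.lt_or_ge (j.val + 1) N with h1 | h1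
  · rw [Nat.mod_eq_of_lt h1] at h'; omega
  · have : j.val + 1 = N := by omega
    rw [this, Nat.mod_self] at h'; omega

theorem nxt_mk {N v : ℕ} (h : v + 1 < N) (h0 : v < N) :
    nxt ⟨v, h0⟩ = ⟨v + 1, h⟩ := Fin.ext (Nat.mod_eq_of_lt h)

section Constr

variable {m n : ℕ}

/-- Word list for each relator-index: original relators, killers `z i`, commutators. -/
def W (r : Fin n → FreeGroup (Fin m)) : Fin n ⊕ (Fin m ⊕ Fin m) → List ((Fin m ⊕ Fin m) × Bool)
  | .inl k => (r k).toWord.map (Prod.map Sum.inl id)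
  | .inr (.inl i) => [(Sum.inr i, true)]
  | .inr (.inr i) => [(Sum.inl i, true), (Sum.inr i, true), (Sum.inl i, false), (Sum.inr i, false)]

variable (r : Fin n → FreeGroup (Fin m))

/-- Positions in the words. -/
abbrev Q := Σ k : Fin n ⊕ (Fin m ⊕ Fin m), Fin (W r k).length

def gen (p : Q r) : Fin m ⊕ Fin m := ((W r p.1).get p.2).1

def cnum (a : Fin m ⊕ Fin m) : ℕ := Fintype.card {p : Q r // gen r p = a}

noncomputable def σe (a : Fin m ⊕ Fin m) : Fin (cnum r a) ≃ {p : Q r // gen r p = a} :=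
  (Fintype.equivFin _).symm

noncomputable def eQ : Q r ≃ Fin (Fintype.card (Q r)) := Fintype.equivFin _

/-- Index type of the new relators. -/
abbrev T := (Fin n ⊕ (Fin m ⊕ Fin m)) ⊕ (Σ a : Fin m ⊕ Fin m, Fin (cnum r a))

noncomputable def word : T r → List (Fin (Fintype.card (Q r)) × Bool)
  | .inl k => List.ofFn (fun j : Fin (W r k).length => (eQ r ⟨k, j⟩, ((W r k).get j).2))
  | .inr ⟨a, j⟩ => [(eQ r (σe r a (nxt j)).1, true), (eQ r (σe r a j).1, false)]

noncomputable def S : T r → FreeGroup (Fin (Fintype.card (Q r))) :=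
  fun τ => FreeGroup.mk (word r τ)

theorem length_W_pos (hr : ∀ k, r k ≠ 1) (k) : 0 < (W r k).length := by
  rcases k with k | i | i
  · simp only [W, List.length_map]
    rcases Nat.eq_zero_or_pos (r k).toWord.length with h | h
    · exact absurd (FreeGroup.toWord_eq_nil_iff.1 (List.length_eq_zero_iff.1 h)) (hr k)
    · exact h
  · simp [W]
  · simp [W]

theorem chain'_W (k) : List.Chain' RP (W r k) := by
  rcases k with k | i | i
  · show List.Chain' RP ((r k).toWord.map (Prod.map Sum.inl id))
    unfold List.Chain'; rw [List.isChain_map]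
    refine (chain'_toWord (r k)).imp ?_
    rintro ⟨a, b⟩ ⟨a', b'⟩ h ⟨h1, h2⟩
    exact h ⟨Sum.inl.inj h1, h2⟩
  · exact List.isChain_singleton _
  · show List.Chain' RP [(Sum.inl i, true), (Sum.inr i, true), (Sum.inl i, false),
      (Sum.inr i, false)]
    simp only [List.Chain', List.isChain_cons_cons, List.isChain_singleton, RP]
    refine ⟨?_, ?_, ?_, trivial⟩ <;> simp

theorem two_le_cnum (a : Fin m ⊕ Fin m) : 2 ≤ cnum r a := by
  show 1 < Fintype.card _
  rw [Fintype.one_lt_card_iff]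
  rcases a with i | i
  · refine ⟨⟨⟨Sum.inr (Sum.inr i), ⟨0, by simp [W]⟩⟩, rfl⟩,
      ⟨⟨Sum.inr (Sum.inr i), ⟨2, by simp [W]⟩⟩, rfl⟩, ?_⟩
    intro h
    have h2 := congrArg (fun x => (x.1.2 : ℕ)) h
    simp at h2
  · refine ⟨⟨⟨Sum.inr (Sum.inl i), ⟨0, by simp [W]⟩⟩, rfl⟩,
      ⟨⟨Sum.inr (Sum.inr i), ⟨1, by simp [W]⟩⟩, rfl⟩, ?_⟩
    intro h
    have h2 := congrArg (fun x => (x.1.2 : ℕ)) h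
    simp at h2

theorem cnum_pos (a : Fin m ⊕ Fin m) : 0 < cnum r a :=
  lt_of_lt_of_le Nat.zero_lt_two (two_le_cnum r a)

theorem gen_σe (a : Fin m ⊕ Fin m) (j : Fin (cnum r a)) : gen r (σe r a j).1 = a :=
  (σe r a j).2

theorem σe_val_ne (a : Fin m ⊕ Fin m) {j j' : Fin (cnum r a)} (h : j ≠ j') :
    (σe r a j).1 ≠ (σe r a j').1 := by
  intro hv
  exact h ((σe r a).injective (Subtype.ext hv))

theorem chain'_word (τ : T r) : List.Chain' RP (word r τ) := by
  rcases τ with k | ⟨a, j⟩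
  · show List.Chain' RP (List.ofFn _)
    refine List.Pairwise.isChain ?_
    rw [List.pairwise_ofFn]
    intro i j hij ⟨h1, _⟩
    exact absurd ((eQ r).injective h1) (by simp [Fin.ne_of_lt hij])
  · show List.Chain' RP [_, _]
    refine List.isChain_cons_cons.2 ⟨?_, List.isChain_singleton _⟩
    rintro ⟨h1, _⟩
    exact σe_val_ne r a (nxt_ne (two_le_cnum r a) j) ((eQ r).injective h1)

theorem toWord_S (τ : T r) : (S r τ).toWord = word r τ :=
  toWord_mk_eq (chain'_word r τ)

theorem length_word_pos (hr : ∀ k, r k ≠ 1) (τ : T r) : 0 < (word r τ).length := by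
  rcases τ with k | ⟨a, j⟩
  · show 0 < (List.ofFn _).length
    rw [List.length_ofFn]
    exact length_W_pos r hr k
  · show 0 < (2:ℕ); norm_num

theorem S_ne_one (hr : ∀ k, r k ≠ 1) (τ : T r) : S r τ ≠ 1 := by
  intro h
  have := toWord_S r τ
  rw [h, FreeGroup.toWord_one] at this
  have h2 := length_word_pos r hr τ
  rw [← this, List.length_nil] at h2
  exact Nat.lt_irrefl 0 h2

end Constr

section PG

variable {m n : ℕ} (r : Fin n → FreeGroup (Fin m))

/-- The new relator set. -/
noncomputable abbrev rels := Set.range (S r)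

/-- projection to the new presented group, as a hom -/
noncomputable abbrev π : FreeGroup (Fin (Fintype.card (Q r))) →* PresentedGroup (rels r) :=
  PresentedGroup.mk (rels r)

theorem relator_one (τ : T r) : π r (S r τ) = 1 := by
  have : S r τ ∈ Subgroup.normalClosure (rels r) :=
    Subgroup.subset_normalClosure ⟨τ, rfl⟩
  exact (QuotientGroup.eq_one_iff _).2 this

theorem mk_two {β : Type*} (x y : β) :
    FreeGroup.mk [(x, true), (y, false)] = FreeGroup.of x * (FreeGroup.of y)⁻¹ := by
  rw [FreeGroup.of, FreeGroup.of, FreeGroup.inv_mk, FreeGroup.mul_mk]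
  rfl

theorem chain_rel (a : Fin m ⊕ Fin m) (j : Fin (cnum r a)) :
    π r (FreeGroup.of (eQ r (σe r a (nxt j)).1)) = π r (FreeGroup.of (eQ r (σe r a j).1)) := by
  have h := relator_one r (.inr ⟨a, j⟩)
  have hw : S r (.inr ⟨a, j⟩) =
      FreeGroup.of (eQ r (σe r a (nxt j)).1) * (FreeGroup.of (eQ r (σe r a j).1))⁻¹ := by
    show FreeGroup.mk _ = _
    exact mk_two _ _
  rw [hw, _root_.map_mul, _root_.map_inv, mul_inv_eq_one] at h
  exact h

theorem connect_base (a : Fin m ⊕ Fin m) (j : Fin (cnum r a)) :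
    π r (FreeGroup.of (eQ r (σe r a j).1)) =
      π r (FreeGroup.of (eQ r (σe r a ⟨0, cnum_pos r a⟩).1)) := by
  obtain ⟨v, hv⟩ := j
  induction v with
  | zero => rfl
  | succ v ih =>
    have hv' : v < cnum r a := Nat.lt_of_succ_lt hv
    have h1 := chain_rel r a ⟨v, hv'⟩
    rw [nxt_mk hv hv'] at h1
    rw [h1]
    exact ih hv'

theorem connect {p q : Q r} (h : gen r p = gen r q) :
    π r (FreeGroup.of (eQ r p)) = π r (FreeGroup.of (eQ r q)) := by
  set a := gen r q with ha
  have hp : p = (σe r a ((σe r a).symm ⟨p, h⟩)).1 := by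
    rw [Equiv.apply_symm_apply]
  have hq : q = (σe r a ((σe r a).symm ⟨q, rfl⟩)).1 := by
    rw [Equiv.apply_symm_apply]
  rw [hp, hq, connect_base r a ((σe r a).symm ⟨p, h⟩), connect_base r a ((σe r a).symm ⟨q, rfl⟩)]

theorem word_z (i : Fin m) :
    word r (.inl (Sum.inr (Sum.inl i))) =
      [(eQ r ⟨Sum.inr (Sum.inl i), ⟨0, by simp [W]⟩⟩, true)] := by
  show List.ofFn _ = _
  have : (W r (Sum.inr (Sum.inl i))).length = 1 := rfl
  rfl

theorem kill_z (i : Fin m) :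
    π r (FreeGroup.of (eQ r ⟨Sum.inr (Sum.inl i), ⟨0, by simp [W]⟩⟩)) = 1 := by
  have h := relator_one r (.inl (Sum.inr (Sum.inl i)))
  have hw : S r (.inl (Sum.inr (Sum.inl i))) =
      FreeGroup.of (eQ r ⟨Sum.inr (Sum.inl i), ⟨0, by simp [W]⟩⟩) := by
    show FreeGroup.mk _ = _
    rw [word_z]
    rfl
  rwa [hw] at h

theorem kill_inr {p : Q r} {i : Fin m} (h : gen r p = Sum.inr i) :
    π r (FreeGroup.of (eQ r p)) = 1 := by
  have hq : gen r (⟨Sum.inr (Sum.inl i), ⟨0, by simp [W]⟩⟩ : Q r) = Sum.inr i := rfl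
  rw [connect r (h.trans hq.symm)]
  exact kill_z r i

end PG

section Iso

variable {m n : ℕ} (r : Fin n → FreeGroup (Fin m))

/-- base position of a generator class -/
noncomputable def base (a : Fin m ⊕ Fin m) : Q r := (σe r a ⟨0, cnum_pos r a⟩).1

theorem gen_base (a : Fin m ⊕ Fin m) : gen r (base r a) = a := (σe r a _).2

/-- images of old generators -/
noncomputable def fOld : Fin m → PresentedGroup (rels r) :=
  fun i => π r (FreeGroup.of (eQ r (base r (Sum.inl i))))

variable (Rset : Set (FreeGroup (Fin m)))

/-- images of new generators -/
noncomputable def fNew : Fin (Fintype.card (Q r)) → PresentedGroup Rset :=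
  fun x => Sum.elim (fun i => PresentedGroup.mk Rset (FreeGroup.of i)) (fun _ => 1)
    (gen r ((eQ r).symm x))

theorem gen_inl (k : Fin n) (i : ℕ) (hi : i < (W r (Sum.inl k)).length)
    (hi' : i < (r k).toWord.length) :
    gen r ⟨Sum.inl k, ⟨i, hi⟩⟩ = Sum.inl ((r k).toWord[i].1) := by
  show ((W r (Sum.inl k)).get ⟨i, hi⟩).1 = _
  simp only [W, List.get_eq_getElem, List.getElem_map]
  rfl

theorem sgn_inl (k : Fin n) (i : ℕ) (hi : i < (W r (Sum.inl k)).length)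
    (hi' : i < (r k).toWord.length) :
    ((W r (Sum.inl k)).get ⟨i, hi⟩).2 = (r k).toWord[i].2 := by
  simp only [W, List.get_eq_getElem, List.getElem_map]
  rfl

theorem word_inl (k : Fin n ⊕ (Fin m ⊕ Fin m)) :
    word r (.inl k) = List.ofFn
      (fun j : Fin (W r k).length => (eQ r ⟨k, j⟩, ((W r k).get j).2)) := rfl

theorem hphi (hr1 : ∀ k, r k ≠ 1) (hsurj : ∀ w ∈ Rset, w ≠ 1 → ∃ k, r k = w) :
    ∀ w ∈ Rset, FreeGroup.lift (fOld r) w = 1 := by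
  intro w hw
  by_cases h1 : w = 1
  · rw [h1, _root_.map_one]
  obtain ⟨k, rfl⟩ := hsurj w hw h1
  have hrel := relator_one r (.inl (Sum.inl k))
  have h2 : S r (.inl (Sum.inl k)) = FreeGroup.mk (word r (.inl (Sum.inl k))) := rfl
  rw [h2, hom_mk, word_inl] at hrel
  conv_lhs => rw [← FreeGroup.mk_toWord (x := r k)]
  rw [hom_mk, ← hrel]
  congr 1
  have hlen : (W r (Sum.inl k)).length = (r k).toWord.length := by simp [W]
  refine List.ext_getElem (by simp [hlen]) ?_
  intro i hL1 hL2
  have hi' : i < (r k).toWord.length := by simpa using hL1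
  have hiW : i < (W r (Sum.inl k)).length := by rw [hlen]; exact hi'
  simp only [List.getElem_map, List.getElem_ofFn]
  have hgen : gen r ⟨Sum.inl k, ⟨i, hiW⟩⟩ = Sum.inl ((r k).toWord[i].1) :=
    gen_inl r k i hiW hi'
  have hf : FreeGroup.lift (fOld r) (FreeGroup.of ((r k).toWord[i].1)) =
      π r (FreeGroup.of (eQ r ⟨Sum.inl k, ⟨i, hiW⟩⟩)) := by
    rw [FreeGroup.lift_apply_of, fOld]
    exact connect r ((gen_base r _).trans hgen.symm)
  have hsgn : ((W r (Sum.inl k)).get ⟨i, hiW⟩).2 = (r k).toWord[i].2 :=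
    sgn_inl r k i hiW hi'
  rw [hsgn, hf]

theorem hpsi (hrR : ∀ k, r k ∈ Rset) :
    ∀ w ∈ rels r, FreeGroup.lift (fNew r Rset) w = 1 := by
  rintro w ⟨τ, rfl⟩
  show FreeGroup.lift (fNew r Rset) (FreeGroup.mk (word r τ)) = 1
  rw [hom_mk]
  rcases τ with (k | i | i) | ⟨a, j⟩
  · -- original relator
    have hmem : PresentedGroup.mk Rset (r k) = 1 :=
      (QuotientGroup.eq_one_iff _).2 (Subgroup.subset_normalClosure (hrR k))
    conv_rhs => rw [← hmem]
    conv_rhs => rw [← FreeGroup.mk_toWord (x := r k), hom_mk]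
    rw [word_inl]
    congr 1
    have hlen : (W r (Sum.inl k)).length = (r k).toWord.length := by simp [W]
    refine List.ext_getElem (by simp [hlen]) ?_
    intro i hL1 hL2
    have hi' : i < (r k).toWord.length := by simpa using hL2
    have hiW : i < (W r (Sum.inl k)).length := by rw [hlen]; exact hi'
    simp only [List.getElem_map, List.getElem_ofFn]
    have hgen : gen r ⟨Sum.inl k, ⟨i, hiW⟩⟩ = Sum.inl ((r k).toWord[i].1) :=
      gen_inl r k i hiW hi'
    have hf : FreeGroup.lift (fNew r Rset) (FreeGroup.of (eQ r ⟨Sum.inl k, ⟨i, hiW⟩⟩)) =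
        PresentedGroup.mk Rset (FreeGroup.of ((r k).toWord[i].1)) := by
      rw [FreeGroup.lift_apply_of, fNew, Equiv.symm_apply_apply, hgen]
      rfl
    have hsgn : ((W r (Sum.inl k)).get ⟨i, hiW⟩).2 = (r k).toWord[i].2 :=
      sgn_inl r k i hiW hi'
    rw [hsgn, hf]
  · -- z relator
    rw [word_z]
    simp only [List.map_cons, List.map_nil, List.prod_cons, List.prod_nil, cond_true, mul_one]
    rw [FreeGroup.lift_apply_of, fNew, Equiv.symm_apply_apply]
    rfl
  · -- commutator relator
    have hword : word r (.inl (Sum.inr (Sum.inr i))) =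
        [(eQ r ⟨Sum.inr (Sum.inr i), ⟨0, by simp [W]⟩⟩, true),
         (eQ r ⟨Sum.inr (Sum.inr i), ⟨1, by simp [W]⟩⟩, true),
         (eQ r ⟨Sum.inr (Sum.inr i), ⟨2, by simp [W]⟩⟩, false),
         (eQ r ⟨Sum.inr (Sum.inr i), ⟨3, by simp [W]⟩⟩, false)] := by
      rw [word_inl]
      have h4 : (W r (Sum.inr (Sum.inr i))).length = 4 := rfl
      rfl
    rw [hword]
    simp only [List.map_cons, List.map_nil, List.prod_cons, List.prod_nil, cond_true, cond_false,
      mul_one, FreeGroup.lift_apply_of]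
    have e0 : fNew r Rset (eQ r ⟨Sum.inr (Sum.inr i), ⟨0, by simp [W]⟩⟩) =
        PresentedGroup.mk Rset (FreeGroup.of i) := by
      rw [fNew, Equiv.symm_apply_apply]; rfl
    have e1 : fNew r Rset (eQ r ⟨Sum.inr (Sum.inr i), ⟨1, by simp [W]⟩⟩) = 1 := by
      rw [fNew, Equiv.symm_apply_apply]; rfl
    have e2 : fNew r Rset (eQ r ⟨Sum.inr (Sum.inr i), ⟨2, by simp [W]⟩⟩) =
        PresentedGroup.mk Rset (FreeGroup.of i) := by
      rw [fNew, Equiv.symm_apply_apply]; rfl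
    have e3 : fNew r Rset (eQ r ⟨Sum.inr (Sum.inr i), ⟨3, by simp [W]⟩⟩) = 1 := by
      rw [fNew, Equiv.symm_apply_apply]; rfl
    rw [e0, e1, e2, e3]
    group
  · -- chain relator
    show ([(eQ r (σe r a (nxt j)).1, true), (eQ r (σe r a j).1, false)].map _).prod = 1
    simp only [List.map_cons, List.map_nil, List.prod_cons, List.prod_nil, cond_true, cond_false,
      mul_one, FreeGroup.lift_apply_of]
    have e1 : fNew r Rset (eQ r (σe r a (nxt j)).1) =
        Sum.elim (fun i => PresentedGroup.mk Rset (FreeGroup.of i)) (fun _ => 1) a := by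
      rw [fNew, Equiv.symm_apply_apply, gen_σe]
    have e2 : fNew r Rset (eQ r (σe r a j).1) =
        Sum.elim (fun i => PresentedGroup.mk Rset (FreeGroup.of i)) (fun _ => 1) a := by
      rw [fNew, Equiv.symm_apply_apply, gen_σe]
    rw [e1, e2, mul_inv_cancel]

/-- The main isomorphism. -/
noncomputable def mainIso (hr1 : ∀ k, r k ≠ 1) (hrR : ∀ k, r k ∈ Rset)
    (hsurj : ∀ w ∈ Rset, w ≠ 1 → ∃ k, r k = w) :
    PresentedGroup Rset ≃* PresentedGroup (rels r) := by
  refine MonoidHom.toMulEquiv (PresentedGroup.toGroup (hphi r Rset hr1 hsurj))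
    (PresentedGroup.toGroup (hpsi r Rset hrR)) ?_ ?_
  · ext i
    simp only [MonoidHom.comp_apply, MonoidHom.id_apply, PresentedGroup.toGroup.of]
    show PresentedGroup.toGroup (hpsi r Rset hrR) (π r (FreeGroup.of (eQ r (base r (Sum.inl i)))))
      = _
    have h0 : π r (FreeGroup.of (eQ r (base r (Sum.inl i)))) =
        PresentedGroup.of (eQ r (base r (Sum.inl i))) := rfl
    rw [h0, PresentedGroup.toGroup.of]
    rw [fNew, Equiv.symm_apply_apply, gen_base]
    rfl
  · ext x
    simp only [MonoidHom.comp_apply, MonoidHom.id_apply, PresentedGroup.toGroup.of]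
    rcases hg : gen r ((eQ r).symm x) with i | i
    · have h1 : fNew r Rset x = PresentedGroup.of i := by
        rw [fNew, hg]; rfl
      rw [h1, PresentedGroup.toGroup.of]
      show π r (FreeGroup.of (eQ r (base r (Sum.inl i)))) = _
      have hc := connect r (p := base r (Sum.inl i)) (q := (eQ r).symm x)
        ((gen_base r _).trans hg.symm)
      rw [hc]
      show PresentedGroup.of (eQ r ((eQ r).symm x)) = _
      rw [Equiv.apply_symm_apply]
    · have h1 : fNew r Rset x = 1 := by rw [fNew, hg]; rfl
      rw [h1, _root_.map_one]
      have h2 : PresentedGroup.of (rels := rels r) x =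
          π r (FreeGroup.of (eQ r ((eQ r).symm x))) := by
        rw [Equiv.apply_symm_apply]; rfl
      rw [h2, kill_inr r hg]

end Iso

section Inj

variable {m n : ℕ} (r : Fin n → FreeGroup (Fin m))

theorem word_getElem_inl (k : Fin n ⊕ (Fin m ⊕ Fin m)) (i : ℕ)
    (h : i < (word r (.inl k)).length) (h' : i < (W r k).length) :
    (word r (.inl k))[i] = (eQ r ⟨k, ⟨i, h'⟩⟩, ((W r k).get ⟨i, h'⟩).2) := by
  simp only [word_inl, List.getElem_ofFn]

theorem length_word_inl (k : Fin n ⊕ (Fin m ⊕ Fin m)) :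
    (word r (.inl k)).length = (W r k).length := by
  rw [word_inl, List.length_ofFn]

theorem S_injective (hr1 : ∀ k, r k ≠ 1) : Function.Injective (S r) := by
  intro τ τ' h
  have hw : word r τ = word r τ' := by
    rw [← toWord_S, ← toWord_S, h]
  -- helper: a substituted relator is never equal to a chain word
  have key : ∀ (k : Fin n ⊕ (Fin m ⊕ Fin m)) (a : Fin m ⊕ Fin m) (j : Fin (cnum r a)),
      word r (.inl k) ≠ word r (.inr ⟨a, j⟩) := by
    intro k a j hkj
    have h2 : (word r (.inr ⟨a, j⟩)).length = 2 := rfl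
    have hlen : (W r k).length = 2 := by
      rw [← length_word_inl, hkj, h2]
    have h0' : (0:ℕ) < (W r k).length := by omega
    have h1' : (1:ℕ) < (W r k).length := by omega
    have h0 : (0:ℕ) < (word r (.inl k)).length := by rw [length_word_inl]; omega
    have h1 : (1:ℕ) < (word r (.inl k)).length := by rw [length_word_inl]; omega
    have g0 : (word r (.inl k))[0]'h0 = (eQ r (σe r a (nxt j)).1, true) := by
      simp only [hkj]; rfl
    have g1 : (word r (.inl k))[1]'h1 = (eQ r (σe r a j).1, false) := by
      simp only [hkj]; rfl
    rw [word_getElem_inl r k 0 h0 h0'] at g0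
    rw [word_getElem_inl r k 1 h1 h1'] at g1
    have p0 : (⟨k, ⟨0, h0'⟩⟩ : Q r) = (σe r a (nxt j)).1 :=
      (eQ r).injective (congrArg Prod.fst g0)
    have p1 : (⟨k, ⟨1, h1'⟩⟩ : Q r) = (σe r a j).1 :=
      (eQ r).injective (congrArg Prod.fst g1)
    have s0 : ((W r k).get ⟨0, h0'⟩).2 = true := congrArg Prod.snd g0
    have s1 : ((W r k).get ⟨1, h1'⟩).2 = false := congrArg Prod.snd g1
    have hgen0 : gen r ⟨k, ⟨0, h0'⟩⟩ = a := by rw [p0]; exact gen_σe r a _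
    have hgen1 : gen r ⟨k, ⟨1, h1'⟩⟩ = a := by rw [p1]; exact gen_σe r a _
    have hch := (List.isChain_iff_getElem.1 (chain'_W r k)) 0 (by omega)
    refine hch ⟨?_, ?_⟩
    · show ((W r k).get ⟨0, _⟩).1 = ((W r k).get ⟨0+1, _⟩).1
      exact hgen0.trans hgen1.symm
    · show ((W r k).get ⟨0, _⟩).2 = !((W r k).get ⟨0+1, _⟩).2
      rw [s0]
      have : ((W r k).get ⟨0+1, by omega⟩).2 = false := s1
      rw [this]
      rfl
  rcases τ with k | ⟨a, j⟩ <;> rcases τ' with k' | ⟨a', j'⟩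
  · -- both substituted
    have h0 : (0:ℕ) < (word r (.inl k)).length := by
      rw [length_word_inl]; exact length_W_pos r hr1 k
    have h0' : (0:ℕ) < (word r (.inl k')).length := by
      rw [length_word_inl]; exact length_W_pos r hr1 k'
    have hg : (word r (.inl k))[0]'h0 = (word r (.inl k'))[0]'h0' := by
      congr 1
    rw [word_getElem_inl r k 0 h0 (by rwa [length_word_inl] at h0),
        word_getElem_inl r k' 0 h0' (by rwa [length_word_inl] at h0')] at hg
    have := (eQ r).injective (congrArg Prod.fst hg)
    have hk : k = k' := congrArg Sigma.fst this
    rw [hk]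
  · exact absurd hw (key k a' j')
  · exact absurd hw.symm (key k' a j)
  · -- both chain
    have hw' : [(eQ r (σe r a (nxt j)).1, true), (eQ r (σe r a j).1, false)]
        = [(eQ r (σe r a' (nxt j')).1, true), (eQ r (σe r a' j').1, false)] := hw
    simp only [List.cons.injEq, Prod.mk.injEq, and_true] at hw'
    have hp : (σe r a j).1 = (σe r a' j').1 := (eQ r).injective hw'.2
    have ha : a = a' := by
      rw [← gen_σe r a j, ← gen_σe r a' j', hp]
    subst ha
    have hj : j = j' := (σe r a).injective (Subtype.ext hp)
    rw [hj]

end Inj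

section Count

theorem count_ofFn {β : Type*} [DecidableEq β] :
    ∀ {N : ℕ} (f : Fin N → β) (a : β),
      (List.ofFn f).count a = ∑ j : Fin N, if f j = a then 1 else 0
  | 0, f, a => by simp
  | N + 1, f, a => by
    rw [List.ofFn_succ, List.count_cons, count_ofFn (fun j => f j.succ) a, Fin.sum_univ_succ]
    simp only [beq_iff_eq]
    omega

variable {m n : ℕ} (r : Fin n → FreeGroup (Fin m))

theorem count_word_inl (p : Q r) (k : Fin n ⊕ (Fin m ⊕ Fin m)) :
    ((word r (.inl k)).map Prod.fst).count (eQ r p) =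
      ∑ j : Fin (W r k).length, if (⟨k, j⟩ : Q r) = p then 1 else 0 := by
  rw [word_inl, List.map_ofFn, count_ofFn]
  refine Finset.sum_congr rfl fun j _ => ?_
  congr 1
  exact propext (Equiv.apply_eq_iff_eq (eQ r))

theorem sum_count_inl (p : Q r) :
    (∑ k : Fin n ⊕ (Fin m ⊕ Fin m),
      ((word r (.inl k)).map Prod.fst).count (eQ r p)) = 1 := by
  have : (∑ k : Fin n ⊕ (Fin m ⊕ Fin m),
      ((word r (.inl k)).map Prod.fst).count (eQ r p)) =
      ∑ q : Q r, if q = p then 1 else 0 := by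
    rw [← Finset.univ_sigma_univ, Finset.sum_sigma]
    exact Finset.sum_congr rfl fun k _ => count_word_inl r p k
  rw [this, Finset.sum_ite_eq' Finset.univ p (fun _ => 1)]
  simp

theorem sum_sigma_indicator (p : Q r) (a : Fin m ⊕ Fin m) :
    (∑ j : Fin (cnum r a), if (σe r a j).1 = p then 1 else 0) =
      if gen r p = a then 1 else 0 := by
  rw [Equiv.sum_comp (σe r a) (fun q => if q.1 = p then 1 else 0)]
  by_cases h : gen r p = a
  · rw [if_pos h]
    have : ∀ q : {q : Q r // gen r q = a}, (if q.1 = p then 1 else 0) =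
        if q = ⟨p, h⟩ then 1 else 0 := by
      intro q
      congr 1
      exact propext ⟨fun hh => Subtype.ext hh, fun hh => congrArg Subtype.val hh⟩
    rw [Finset.sum_congr rfl fun q _ => this q,
      Finset.sum_ite_eq' Finset.univ (⟨p, h⟩ : {q : Q r // gen r q = a}) (fun _ => 1)]
    simp
  · rw [if_neg h]
    refine Finset.sum_eq_zero fun q _ => ?_
    rw [if_neg]
    intro hq
    exact h (hq ▸ q.2)

theorem count_word_chain (p : Q r) (a : Fin m ⊕ Fin m) (j : Fin (cnum r a)) :
    ((word r (.inr ⟨a, j⟩)).map Prod.fst).count (eQ r p) =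
      (if (σe r a (nxt j)).1 = p then 1 else 0) + (if (σe r a j).1 = p then 1 else 0) := by
  show ([eQ r (σe r a (nxt j)).1, eQ r (σe r a j).1].count (eQ r p)) = _
  rw [List.count_cons, List.count_cons, List.count_nil]
  simp only [beq_iff_eq, Equiv.apply_eq_iff_eq]
  have e1 : ((σe r a (nxt j)).1 = p) = (eQ r (σe r a (nxt j)).1 = eQ r p) := by
    exact propext (Equiv.apply_eq_iff_eq (eQ r)).symm
  omega

set_option maxHeartbeats 1000000 in
theorem sum_count_chain (p : Q r) :
    (∑ x : Σ a : Fin m ⊕ Fin m, Fin (cnum r a),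
      ((word r (.inr x)).map Prod.fst).count (eQ r p)) = 2 := by
  rw [← Finset.univ_sigma_univ, Finset.sum_sigma]
  have hA : ∀ a : Fin m ⊕ Fin m,
      (∑ j : Fin (cnum r a), ((word r (.inr ⟨a, j⟩)).map Prod.fst).count (eQ r p)) =
      if gen r p = a then 2 else 0 := by
    intro a
    rw [Finset.sum_congr rfl fun j _ => count_word_chain r p a j, Finset.sum_add_distrib]
    have h2 : (∑ j : Fin (cnum r a), if (σe r a (nxt j)).1 = p then 1 else 0) =
        ∑ j : Fin (cnum r a), if (σe r a j).1 = p then 1 else 0 :=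
      Function.Bijective.sum_comp nxt_bijective (fun q => if (σe r a q).1 = p then 1 else 0)
    rw [h2, sum_sigma_indicator]
    by_cases h : gen r p = a <;> simp [h]
  rw [Finset.sum_congr rfl fun a _ => hA a,
    Finset.sum_ite_eq Finset.univ (gen r p) (fun _ => 2)]
  simp

theorem sum_count (p : Q r) :
    (∑ τ : T r, ((word r τ).map Prod.fst).count (eQ r p)) = 3 := by
  rw [Fintype.sum_sum_type]
  rw [sum_count_inl, sum_count_chain]

end Count
end Occ3

/-- Every finitely presentable group admits a finite presentation (with pairwise distinct
nontrivial relators) in which every generator occurs, counted regardless of sign, exactly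
three times among all the relators. -/
theorem exists_presentation_each_generator_occurs_thrice
    (G : Type*) [Group G]
    (hG : ∃ (m : ℕ) (R : Set (FreeGroup (Fin m))),
        R.Finite ∧ Nonempty (G ≃* PresentedGroup R)) :
    ∃ (m t : ℕ) (s : Fin t → FreeGroup (Fin m)),
      Function.Injective s ∧
      (∀ j, s j ≠ 1) ∧
      Nonempty (G ≃* PresentedGroup (Set.range s)) ∧
      ∀ i : Fin m, (∑ j : Fin t, ((s j).toWord.map Prod.fst).count i) = 3 := by
  classical
  obtain ⟨m, R, hRfin, ⟨e⟩⟩ := hG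
  set F : Finset (FreeGroup (Fin m)) := hRfin.toFinset.erase 1 with hF
  set n := F.card with hn
  set r : Fin n → FreeGroup (Fin m) := fun k => ((F.equivFin).symm k).1 with hrdef
  have hr1 : ∀ k, r k ≠ 1 := fun k => (Finset.mem_erase.1 ((F.equivFin).symm k).2).1
  have hrR : ∀ k, r k ∈ R := fun k =>
    hRfin.mem_toFinset.1 ((Finset.mem_erase.1 ((F.equivFin).symm k).2).2)
  have hsurj : ∀ w ∈ R, w ≠ 1 → ∃ k, r k = w := by
    intro w hw h1
    have hwF : w ∈ F := Finset.mem_erase.2 ⟨h1, hRfin.mem_toFinset.2 hw⟩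
    refine ⟨F.equivFin ⟨w, hwF⟩, ?_⟩
    rw [hrdef]
    simp
  let eT := Fintype.equivFin (Occ3.T r)
  refine ⟨Fintype.card (Occ3.Q r), Fintype.card (Occ3.T r), Occ3.S r ∘ eT.symm, ?_, ?_, ?_, ?_⟩
  · exact (Occ3.S_injective r hr1).comp eT.symm.injective
  · intro j
    exact Occ3.S_ne_one r hr1 _
  · have hrange : Set.range (Occ3.S r ∘ eT.symm) = Set.range (Occ3.S r) := by
      rw [Set.range_comp, Equiv.range_eq_univ, Set.image_univ]
    rw [hrange]
    exact ⟨e.trans (Occ3.mainIso r R hr1 hrR hsurj)⟩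
  · intro i
    have h1 : ∀ j : Fin (Fintype.card (Occ3.T r)),
        (((Occ3.S r ∘ eT.symm) j).toWord.map Prod.fst).count i
          = ((Occ3.word r (eT.symm j)).map Prod.fst).count i := by
      intro j
      rw [Function.comp_apply, Occ3.toWord_S]
    rw [Finset.sum_congr rfl fun j _ => h1 j]
    rw [Equiv.sum_comp eT.symm (fun τ => ((Occ3.word r τ).map Prod.fst).count i)]
    have h2 : i = Occ3.eQ r ((Occ3.eQ r).symm i) := (Equiv.apply_symm_apply _ _).symm
    rw [h2]
    exact Occ3.sum_count r ((Occ3.eQ r).symm i)
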